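/- Let Ω' ⊂ ℝ³ be bounded and measurable, q ∈ L^∞(Ω'), and for each large τ > 0 let v₁ = e^{x·ρ₁}(1+ψ₁), v₂ = e^{x·ρ₂}(1+ψ₂) with ρ₁ + ρ₂ = ik for a fixed k ∈ ℝ³, and ‖ψⱼ‖_{L²(Ω')} ≤ C/τ. If ∫_{Ω'} q v₁ v₂ dx = 0 for all large τ, then ∫_{Ω'} q(x) e^{ik·x} dx = 0. -/

import Mathlib

open MeasureTheory
open scoped RealInnerProductSpace

/-- If v₁ = e^{x·ρ₁}(1+ψ₁) and v₂ = e^{x·ρ₂}(1+ψ₂) with ρ₁ + ρ₂ = ik and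
‖ψⱼ‖_{L²(Ω')} ≤ C/τ, and if ∫_{Ω'} q v₁ v₂ = 0 for all large τ, then
∫_{Ω'} q(x) e^{ik·x} dx = 0. -/
theorem stmt11 (Ω' : Set (EuclideanSpace ℝ (Fin 3)))
    (hΩb : Bornology.IsBounded Ω') (hΩm : MeasurableSet Ω')
    (q : EuclideanSpace ℝ (Fin 3) → ℂ) (hqm : Measurable q)
    (Mq : ℝ) (hqb : ∀ x, ‖q x‖ ≤ Mq)
    (k : EuclideanSpace ℝ (Fin 3)) (C : ℝ) (hC : 0 < C)
    (ρ₁ ρ₂ : ℝ → Fin 3 → ℂ)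
    (hsum : ∀ τ ≥ (1 : ℝ), ∀ j, ρ₁ τ j + ρ₂ τ j = Complex.I * (k j : ℝ))
    (ψ₁ ψ₂ : ℝ → EuclideanSpace ℝ (Fin 3) → ℂ)
    (hm₁ : ∀ τ, AEStronglyMeasurable (ψ₁ τ) volume)
    (hm₂ : ∀ τ, AEStronglyMeasurable (ψ₂ τ) volume)
    (hi₁ : ∀ τ ≥ (1 : ℝ), IntegrableOn (fun x => ‖ψ₁ τ x‖ ^ 2) Ω')
    (hi₂ : ∀ τ ≥ (1 : ℝ), IntegrableOn (fun x => ‖ψ₂ τ x‖ ^ 2) Ω')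
    (hb₁ : ∀ τ ≥ (1 : ℝ), ∫ x in Ω', ‖ψ₁ τ x‖ ^ 2 ≤ (C / τ) ^ 2)
    (hb₂ : ∀ τ ≥ (1 : ℝ), ∫ x in Ω', ‖ψ₂ τ x‖ ^ 2 ≤ (C / τ) ^ 2)
    (hvanish : ∀ τ ≥ (1 : ℝ),
      ∫ x in Ω',
        q x * (Complex.exp (∑ j, (x j : ℂ) * ρ₁ τ j) * (1 + ψ₁ τ x))
            * (Complex.exp (∑ j, (x j : ℂ) * ρ₂ τ j) * (1 + ψ₂ τ x)) = 0) :
    ∫ x in Ω', q x * Complex.exp (Complex.I * (⟪k, x⟫ : ℝ)) = 0 := by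
  classical
  set μ : Measure (EuclideanSpace ℝ (Fin 3)) := volume.restrict Ω' with hμ
  haveI : IsFiniteMeasure μ := ⟨by
    rw [hμ, Measure.restrict_apply_univ]; exact hΩb.measure_lt_top⟩
  have hMq : 0 ≤ Mq := le_trans (norm_nonneg _) (hqb 0)
  set E : EuclideanSpace ℝ (Fin 3) → ℂ :=
    fun x => Complex.exp (Complex.I * (⟪k, x⟫ : ℝ)) with hEdef
  have hEnorm : ∀ x, ‖E x‖ = 1 := by
    intro x
    simp [hEdef, Complex.norm_exp]
  have hEc : Continuous E := by
    apply Complex.continuous_exp.comp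
    exact continuous_const.mul
      (Complex.continuous_ofReal.comp (continuous_const.inner continuous_id))
  have hqE : AEStronglyMeasurable (fun x => q x * E x) μ :=
    (hqm.aestronglyMeasurable.mul hEc.measurable.aestronglyMeasurable).restrict
  have hg₀ : Integrable (fun x => q x * E x) μ := by
    refine Integrable.mono' (integrable_const Mq) hqE ?_
    refine Filter.Eventually.of_forall fun x => ?_
    rw [norm_mul, hEnorm, mul_one]; exact hqb x
  set V : ℝ := (μ Set.univ).toReal with hV
  have hVnn : 0 ≤ V := ENNReal.toReal_nonneg
  have hr2 : ∀ y : ℝ, y ^ (2 : ℝ) = y ^ 2 := fun y => by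
    rw [show (2 : ℝ) = ((2 : ℕ) : ℝ) by norm_num, Real.rpow_natCast]
  have hof : ENNReal.ofReal (2 : ℝ) = 2 := by norm_num
  have hpq : (2 : ℝ).HolderConjugate 2 := Real.HolderConjugate.two_two
  -- the main estimate
  have main : ∀ τ ≥ (1 : ℝ), ‖∫ x, q x * E x ∂μ‖ ≤
      Mq * (C / τ * Real.sqrt V) + (Mq * (C / τ * Real.sqrt V) + Mq * (C / τ * (C / τ))) := by
    intro τ hτ
    have hτ0 : (0 : ℝ) < τ := lt_of_lt_of_le one_pos hτ
    have hCτ : 0 ≤ C / τ := by positivity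
    have hψ₁L2 : MemLp (ψ₁ τ) 2 μ :=
      (memLp_two_iff_integrable_sq_norm ((hm₁ τ).restrict)).mpr (hi₁ τ hτ)
    have hψ₂L2 : MemLp (ψ₂ τ) 2 μ :=
      (memLp_two_iff_integrable_sq_norm ((hm₂ τ).restrict)).mpr (hi₂ τ hτ)
    have hψ₁i : Integrable (ψ₁ τ) μ := hψ₁L2.integrable (by norm_num)
    have hψ₂i : Integrable (ψ₂ τ) μ := hψ₂L2.integrable (by norm_num)
    have h12 : Integrable (fun x => ‖ψ₁ τ x‖ * ‖ψ₂ τ x‖) μ := by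
      have := (MemLp.smul (r := 1) hψ₂L2.norm hψ₁L2.norm
        (hpqr := ⟨by rw [inv_one, ENNReal.inv_two_add_inv_two]⟩)).integrable le_rfl
      simpa [Pi.smul_apply, smul_eq_mul, Pi.mul_def] using this
    -- integrability of the four pieces
    have hg₁ : Integrable (fun x => q x * E x * ψ₁ τ x) μ := by
      refine Integrable.mono' (hψ₁i.norm.const_mul Mq)
        (hqE.mul (hm₁ τ).restrict) (Filter.Eventually.of_forall fun x => ?_)
      rw [norm_mul, norm_mul, hEnorm, mul_one]
      exact mul_le_mul_of_nonneg_right (hqb x) (norm_nonneg _)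
    have hg₂ : Integrable (fun x => q x * E x * ψ₂ τ x) μ := by
      refine Integrable.mono' (hψ₂i.norm.const_mul Mq)
        (hqE.mul (hm₂ τ).restrict) (Filter.Eventually.of_forall fun x => ?_)
      rw [norm_mul, norm_mul, hEnorm, mul_one]
      exact mul_le_mul_of_nonneg_right (hqb x) (norm_nonneg _)
    have hg₃ : Integrable (fun x => q x * E x * (ψ₁ τ x * ψ₂ τ x)) μ := by
      refine Integrable.mono' (h12.const_mul Mq)
        (hqE.mul ((hm₁ τ).restrict.mul (hm₂ τ).restrict))
        (Filter.Eventually.of_forall fun x => ?_)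
      rw [norm_mul, norm_mul, hEnorm, mul_one, norm_mul]
      exact mul_le_mul_of_nonneg_right (hqb x) (by positivity)
    -- rewrite the vanishing integral
    have h0 := hvanish τ hτ
    have hx : ∀ x : EuclideanSpace ℝ (Fin 3),
        q x * (Complex.exp (∑ j, (x j : ℂ) * ρ₁ τ j) * (1 + ψ₁ τ x))
          * (Complex.exp (∑ j, (x j : ℂ) * ρ₂ τ j) * (1 + ψ₂ τ x))
        = (q x * E x + q x * E x * ψ₁ τ x)
          + (q x * E x * ψ₂ τ x + q x * E x * (ψ₁ τ x * ψ₂ τ x)) := by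
      intro x
      have hexp : Complex.exp (∑ j, (x j : ℂ) * ρ₁ τ j)
          * Complex.exp (∑ j, (x j : ℂ) * ρ₂ τ j) = E x := by
        rw [← Complex.exp_add, ← Finset.sum_add_distrib]
        congr 1
        have hk : ⟪k, x⟫ = ∑ j, k j * x j := by
          simp [PiLp.inner_apply, RCLike.inner_apply]
          exact Finset.sum_congr rfl fun _ _ => mul_comm _ _
        rw [hk]
        push_cast
        rw [Finset.mul_sum]
        refine Finset.sum_congr rfl fun j _ => ?_
        rw [← mul_add, hsum τ hτ j]; ring
      calc q x * (Complex.exp (∑ j, (x j : ℂ) * ρ₁ τ j) * (1 + ψ₁ τ x))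
            * (Complex.exp (∑ j, (x j : ℂ) * ρ₂ τ j) * (1 + ψ₂ τ x))
          = (Complex.exp (∑ j, (x j : ℂ) * ρ₁ τ j)
              * Complex.exp (∑ j, (x j : ℂ) * ρ₂ τ j))
            * (q x * ((1 + ψ₁ τ x) * (1 + ψ₂ τ x))) := by ring
        _ = E x * (q x * ((1 + ψ₁ τ x) * (1 + ψ₂ τ x))) := by rw [hexp]
        _ = _ := by ring
    simp only [hx] at h0
    have hA : ∫ x, (q x * E x + q x * E x * ψ₁ τ x)
          + (q x * E x * ψ₂ τ x + q x * E x * (ψ₁ τ x * ψ₂ τ x)) ∂μ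
        = (∫ x, q x * E x + q x * E x * ψ₁ τ x ∂μ)
          + ∫ x, q x * E x * ψ₂ τ x + q x * E x * (ψ₁ τ x * ψ₂ τ x) ∂μ :=
      integral_add (hg₀.add hg₁) (hg₂.add hg₃)
    have hB : (∫ x, q x * E x + q x * E x * ψ₁ τ x ∂μ)
        = (∫ x, q x * E x ∂μ) + ∫ x, q x * E x * ψ₁ τ x ∂μ := integral_add hg₀ hg₁
    have hCc : (∫ x, q x * E x * ψ₂ τ x + q x * E x * (ψ₁ τ x * ψ₂ τ x) ∂μ)
        = (∫ x, q x * E x * ψ₂ τ x ∂μ) + ∫ x, q x * E x * (ψ₁ τ x * ψ₂ τ x) ∂μ :=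
      integral_add hg₂ hg₃
    have hkey : ∫ x, q x * E x ∂μ
        = -((∫ x, q x * E x * ψ₁ τ x ∂μ) + (∫ x, q x * E x * ψ₂ τ x ∂μ)
            + (∫ x, q x * E x * (ψ₁ τ x * ψ₂ τ x) ∂μ)) := by
      linear_combination h0 - hA - hB - hCc
    -- Cauchy-Schwarz estimates
    have hnn₁ : (0 : ℝ) ≤ ∫ x, ‖ψ₁ τ x‖ ^ 2 ∂μ :=
      integral_nonneg fun x => by positivity
    have hnn₂ : (0 : ℝ) ≤ ∫ x, ‖ψ₂ τ x‖ ^ 2 ∂μ :=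
      integral_nonneg fun x => by positivity
    have hsq : ∀ (f : EuclideanSpace ℝ (Fin 3) → ℂ), MemLp f 2 μ →
        (∫ x, ‖f x‖ ^ 2 ∂μ) ≤ (C / τ) ^ 2 → (0:ℝ) ≤ ∫ x, ‖f x‖ ^ 2 ∂μ →
        (∫ x, ‖f x‖ ^ (2:ℝ) ∂μ) ^ ((1:ℝ)/2) ≤ C / τ := by
      intro f hf hb hnn
      have : (∫ x, ‖f x‖ ^ (2:ℝ) ∂μ) = ∫ x, ‖f x‖ ^ 2 ∂μ := by
        simp only [hr2]
      rw [this]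
      calc (∫ x, ‖f x‖ ^ 2 ∂μ) ^ ((1:ℝ)/2)
          ≤ ((C / τ) ^ 2) ^ ((1:ℝ)/2) := Real.rpow_le_rpow hnn hb (by norm_num)
        _ = C / τ := by
            rw [← Real.sqrt_eq_rpow, Real.sqrt_sq hCτ]
    have hone : MemLp (fun _ : EuclideanSpace ℝ (Fin 3) => (1:ℝ)) (ENNReal.ofReal 2) μ :=
      memLp_const 1
    have hVint : (∫ _x, (1:ℝ) ^ (2:ℝ) ∂μ) ^ ((1:ℝ)/2) = Real.sqrt V := by
      simp only [Real.one_rpow, integral_const, smul_eq_mul, mul_one, ← hV,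
        Real.sqrt_eq_rpow]
      rfl
    have hCS₁ : ∫ x, ‖ψ₁ τ x‖ ∂μ ≤ C / τ * Real.sqrt V := by
      have h := integral_mul_le_Lp_mul_Lq_of_nonneg (μ := μ) hpq
        (f := fun x => ‖ψ₁ τ x‖) (g := fun _ => (1:ℝ))
        (Filter.Eventually.of_forall fun x => norm_nonneg _)
        (Filter.Eventually.of_forall fun _ => zero_le_one)
        (by rw [hof]; exact hψ₁L2.norm) hone
      simp only [mul_one] at h
      calc ∫ x, ‖ψ₁ τ x‖ ∂μ ≤ _ := h
        _ ≤ C / τ * Real.sqrt V := by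
            rw [hVint]
            exact mul_le_mul_of_nonneg_right
              (hsq _ hψ₁L2 (hb₁ τ hτ) hnn₁) (Real.sqrt_nonneg _)
    have hCS₂ : ∫ x, ‖ψ₂ τ x‖ ∂μ ≤ C / τ * Real.sqrt V := by
      have h := integral_mul_le_Lp_mul_Lq_of_nonneg (μ := μ) hpq
        (f := fun x => ‖ψ₂ τ x‖) (g := fun _ => (1:ℝ))
        (Filter.Eventually.of_forall fun x => norm_nonneg _)
        (Filter.Eventually.of_forall fun _ => zero_le_one)
        (by rw [hof]; exact hψ₂L2.norm) hone
      simp only [mul_one] at h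
      calc ∫ x, ‖ψ₂ τ x‖ ∂μ ≤ _ := h
        _ ≤ C / τ * Real.sqrt V := by
            rw [hVint]
            exact mul_le_mul_of_nonneg_right
              (hsq _ hψ₂L2 (hb₂ τ hτ) hnn₂) (Real.sqrt_nonneg _)
    have hCS₃ : ∫ x, ‖ψ₁ τ x‖ * ‖ψ₂ τ x‖ ∂μ ≤ C / τ * (C / τ) := by
      have h := integral_mul_le_Lp_mul_Lq_of_nonneg (μ := μ) hpq
        (f := fun x => ‖ψ₁ τ x‖) (g := fun x => ‖ψ₂ τ x‖)
        (Filter.Eventually.of_forall fun x => norm_nonneg _)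
        (Filter.Eventually.of_forall fun x => norm_nonneg _)
        (by rw [hof]; exact hψ₁L2.norm) (by rw [hof]; exact hψ₂L2.norm)
      calc ∫ x, ‖ψ₁ τ x‖ * ‖ψ₂ τ x‖ ∂μ ≤ _ := h
        _ ≤ C / τ * (C / τ) :=
            mul_le_mul (hsq _ hψ₁L2 (hb₁ τ hτ) hnn₁) (hsq _ hψ₂L2 (hb₂ τ hτ) hnn₂)
              (Real.rpow_nonneg (integral_nonneg fun x => Real.rpow_nonneg (norm_nonneg _) _) _)
              hCτ
    -- bound each integral term
    have hB : ∀ (f : EuclideanSpace ℝ (Fin 3) → ℂ) (b : ℝ),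
        Integrable (fun x => q x * E x * f x) μ →
        Integrable (fun x => ‖f x‖) μ →
        (∫ x, ‖f x‖ ∂μ) ≤ b → ‖∫ x, q x * E x * f x ∂μ‖ ≤ Mq * b := by
      intro f b hint hnint hbint
      calc ‖∫ x, q x * E x * f x ∂μ‖ ≤ ∫ x, ‖q x * E x * f x‖ ∂μ :=
            norm_integral_le_integral_norm _
        _ ≤ ∫ x, Mq * ‖f x‖ ∂μ := by
            refine integral_mono hint.norm (hnint.const_mul Mq) fun x => ?_
            rw [norm_mul, norm_mul, hEnorm, mul_one]
            exact mul_le_mul_of_nonneg_right (hqb x) (norm_nonneg _)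
        _ = Mq * ∫ x, ‖f x‖ ∂μ := integral_const_mul Mq _
        _ ≤ Mq * b := mul_le_mul_of_nonneg_left hbint hMq
    have e₁ := hB (ψ₁ τ) _ hg₁ hψ₁i.norm hCS₁
    have e₂ := hB (ψ₂ τ) _ hg₂ hψ₂i.norm hCS₂
    have e₃ : ‖∫ x, q x * E x * (ψ₁ τ x * ψ₂ τ x) ∂μ‖ ≤ Mq * (C / τ * (C / τ)) := by
      refine hB (fun x => ψ₁ τ x * ψ₂ τ x) _ hg₃ ?_ ?_
      · simpa [norm_mul] using h12
      · simpa [norm_mul] using hCS₃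
    rw [hkey, norm_neg]
    calc ‖(∫ x, q x * E x * ψ₁ τ x ∂μ) + (∫ x, q x * E x * ψ₂ τ x ∂μ)
            + (∫ x, q x * E x * (ψ₁ τ x * ψ₂ τ x) ∂μ)‖
        ≤ ‖(∫ x, q x * E x * ψ₁ τ x ∂μ) + (∫ x, q x * E x * ψ₂ τ x ∂μ)‖
          + ‖∫ x, q x * E x * (ψ₁ τ x * ψ₂ τ x) ∂μ‖ := norm_add_le _ _
      _ ≤ (‖∫ x, q x * E x * ψ₁ τ x ∂μ‖ + ‖∫ x, q x * E x * ψ₂ τ x ∂μ‖)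
          + ‖∫ x, q x * E x * (ψ₁ τ x * ψ₂ τ x) ∂μ‖ := by
            gcongr; exact norm_add_le _ _
      _ ≤ Mq * (C / τ * Real.sqrt V) + (Mq * (C / τ * Real.sqrt V) + Mq * (C / τ * (C / τ))) := by
            linarith
  -- take τ → ∞
  have hlim : Filter.Tendsto
      (fun τ : ℝ => Mq * (C / τ * Real.sqrt V) + (Mq * (C / τ * Real.sqrt V) + Mq * (C / τ * (C / τ))))
      Filter.atTop (nhds 0) := by
    have hc : Filter.Tendsto (fun τ : ℝ => C / τ) Filter.atTop (nhds 0) :=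
      Filter.Tendsto.const_div_atTop Filter.tendsto_id C
    have := ((hc.mul_const (Real.sqrt V)).const_mul Mq).add
      ((((hc.mul_const (Real.sqrt V)).const_mul Mq)).add ((hc.mul hc).const_mul Mq))
    simpa using this
  have hle : ‖∫ x, q x * E x ∂μ‖ ≤ 0 := by
    refine ge_of_tendsto hlim ?_
    filter_upwards [Filter.eventually_ge_atTop (1:ℝ)] with τ hτ
    exact main τ hτ
  exact norm_le_zero_iff.mp hle
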